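/- For every integer n ≥ 0 and all real x, y: (i) for every integer a ≥ 1, β^{(a)}_{n,λ}(x+y) = Σ_{k=0}^{n} C(n,k)·[β^{(a)}_{k,λ}(x) + (k/2)·β^{(a−1)}_{k−1,λ}(x)]·E_{n−k,λ}(y), where the term (k/2)·β^{(a−1)}_{k−1,λ}(x) is interpreted as 0 when k = 0; and (ii) for every integer b ≥ 1, E^{(b)}_{n,λ}(x+y) = Σ_{k=0}^{n} C(n,k)·(2/(k+1))·β_{n−k,λ}(x)·(E^{(b−1)}_{k+1,λ}(y) − E^{(b)}_{k+1,λ}(y)). -/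

import Mathlib

open Finset PowerSeries

noncomputable def dff (lam x : ℝ) (n : ℕ) : ℝ := ∏ i ∈ Finset.range n, (x - i * lam)

noncomputable def degExp (lam x : ℝ) : PowerSeries ℝ :=
  PowerSeries.mk fun k => dff lam x k / k.factorial

lemma dff_succ (lam x : ℝ) (n : ℕ) : dff lam x (n+1) = dff lam x n * (x - n * lam) :=
  Finset.prod_range_succ _ _

lemma dff_vandermonde (lam x y : ℝ) : ∀ n : ℕ, dff lam (x+y) n
    = ∑ k ∈ Finset.range (n+1), (n.choose k : ℝ) * dff lam x k * dff lam y (n - k) := by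
  intro n
  induction n with
  | zero => simp [dff]
  | succ n ih =>
    rw [dff_succ, ih, Finset.sum_mul]
    have step : ∀ k ∈ Finset.range (n+1),
        (n.choose k : ℝ) * dff lam x k * dff lam y (n-k) * (x + y - n * lam)
        = (n.choose k : ℝ) * (dff lam x (k+1) * dff lam y (n-k))
          + (n.choose k : ℝ) * (dff lam x k * dff lam y (n-k+1)) := by
      intro k hk
      have hk' : k ≤ n := Nat.lt_succ_iff.mp (Finset.mem_range.mp hk)
      have hcast : ((n - k : ℕ) : ℝ) = (n:ℝ) - k := by
        rw [Nat.cast_sub hk']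
      rw [dff_succ, dff_succ, hcast]
      ring
    rw [Finset.sum_congr rfl step, Finset.sum_add_distrib]
    have hB' : ∑ k ∈ Finset.range (n+1), (n.choose k:ℝ) * (dff lam x k * dff lam y (n-k+1))
        = (∑ k ∈ Finset.range (n+1), (n.choose (k+1):ℝ) * (dff lam x (k+1) * dff lam y (n-k)))
          + dff lam y (n+1) := by
      rw [Finset.sum_range_succ' (fun k => (n.choose k:ℝ) * (dff lam x k * dff lam y (n-k+1))) n]
      congr 1
      · rw [Finset.sum_range_succ, Nat.choose_succ_self]
        simp only [Nat.cast_zero, zero_mul, add_zero]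
        refine Finset.sum_congr rfl fun k hk => ?_
        have hk' : k < n := Finset.mem_range.mp hk
        have h1 : n - (k+1) + 1 = n - k := by omega
        rw [h1]
      · simp [dff]
    have hR : ∑ k ∈ Finset.range (n+1+1), ((n+1).choose k : ℝ) * dff lam x k * dff lam y (n+1-k)
        = ∑ k ∈ Finset.range (n+1), ((n.choose k : ℝ) + (n.choose (k+1) : ℝ))
            * (dff lam x (k+1) * dff lam y (n-k)) + dff lam y (n+1) := by
      rw [Finset.sum_range_succ' (fun k => ((n+1).choose k : ℝ) * dff lam x k * dff lam y (n+1-k)) (n+1)]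
      congr 1
      · refine Finset.sum_congr rfl fun k hk => ?_
        have h1 : n + 1 - (k+1) = n - k := by omega
        rw [h1, Nat.choose_succ_succ]
        push_cast; ring
      · simp [dff]
    rw [hB', hR, ← add_assoc, ← Finset.sum_add_distrib]
    congr 1
    refine Finset.sum_congr rfl fun k _ => ?_
    ring

lemma degExp_mul (lam x y : ℝ) : degExp lam x * degExp lam y = degExp lam (x+y) := by
  ext n
  rw [PowerSeries.coeff_mul, Finset.Nat.sum_antidiagonal_eq_sum_range_succ_mk]
  simp only [degExp, coeff_mk]
  rw [dff_vandermonde, Finset.sum_div]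
  refine Finset.sum_congr rfl fun k hk => ?_
  have hk' : k ≤ n := Nat.lt_succ_iff.mp (Finset.mem_range.mp hk)
  rw [Nat.cast_choose ℝ hk']
  have f1 : (k.factorial : ℝ) ≠ 0 := Nat.cast_ne_zero.mpr k.factorial_ne_zero
  have f2 : ((n-k).factorial : ℝ) ≠ 0 := Nat.cast_ne_zero.mpr (n-k).factorial_ne_zero
  have f3 : (n.factorial : ℝ) ≠ 0 := Nat.cast_ne_zero.mpr n.factorial_ne_zero
  field_simp

lemma degExp_sub_one_ne (lam : ℝ) : degExp lam 1 - 1 ≠ 0 := by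
  intro h
  have h1 := congrArg (PowerSeries.coeff (R := ℝ) 1) h
  simp [degExp, dff, PowerSeries.coeff_one] at h1

lemma degExp_add_one_ne (lam : ℝ) : degExp lam 1 + 1 ≠ 0 := by
  intro h
  have h1 := congrArg (PowerSeries.constantCoeff (R := ℝ)) h
  simp [degExp, dff] at h1

theorem stmt19 (lam : ℝ) (hlam : lam ≠ 0)
    (B E : ℕ → ℝ → ℕ → ℝ)
    (hB : ∀ m x, (PowerSeries.mk fun n => B m x n / n.factorial) * (degExp lam 1 - 1) ^ m
        = (PowerSeries.X : PowerSeries ℝ) ^ m * degExp lam x)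
    (hE : ∀ m x, (PowerSeries.mk fun n => E m x n / n.factorial) * (degExp lam 1 + 1) ^ m
        = (2 : PowerSeries ℝ) ^ m * degExp lam x)
    (n : ℕ) (x y : ℝ) :
    (∀ a : ℕ, 1 ≤ a →
      B a (x + y) n = ∑ k ∈ Finset.range (n + 1), (n.choose k : ℝ)
        * (B a x k + (k : ℝ) / 2 * B (a - 1) x (k - 1)) * E 1 y (n - k))
    ∧ (∀ b : ℕ, 1 ≤ b →
      E b (x + y) n = ∑ k ∈ Finset.range (n + 1), (n.choose k : ℝ) * (2 / ((k : ℝ) + 1))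
        * B 1 x (n - k) * (E (b - 1) y (k + 1) - E b y (k + 1))) := by
  constructor
  · intro a ha
    obtain ⟨c, rfl⟩ : ∃ c, a = c + 1 := ⟨a - 1, by omega⟩
    simp only [Nat.add_sub_cancel]
    have h1 := hB (c+1) (x+y)
    have h2 := hB (c+1) x
    have h3 := hB c x
    have h4 := hE 1 y
    rw [pow_one, pow_one] at h4
    have hmul := degExp_mul lam x y
    set F := degExp lam 1 with hF
    set Ex := degExp lam x with hEx
    set Ey := degExp lam y with hEy
    set Exy := degExp lam (x+y) with hExy
    set S' := (PowerSeries.mk fun m => B (c+1) (x+y) m / m.factorial : PowerSeries ℝ) with hS'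
    set S1 := (PowerSeries.mk fun m => B (c+1) x m / m.factorial : PowerSeries ℝ) with hS1
    set S0 := (PowerSeries.mk fun m => B c x m / m.factorial : PowerSeries ℝ) with hS0
    set T := (PowerSeries.mk fun m => E 1 y m / m.factorial : PowerSeries ℝ) with hT
    have key : (2:PowerSeries ℝ) * S' = ((2:PowerSeries ℝ) * S1 + X * S0) * T := by
      have hne : ((F - 1)^(c+1) * (F + 1)) ≠ 0 :=
        mul_ne_zero (pow_ne_zero _ (degExp_sub_one_ne lam)) (degExp_add_one_ne lam)
      apply mul_right_cancel₀ hne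
      calc (2:PowerSeries ℝ) * S' * ((F-1)^(c+1) * (F+1))
          = (2*(F+1)) * (S' * (F-1)^(c+1)) := by ring
        _ = (2*(F+1)) * (X^(c+1) * Exy) := by rw [h1]
        _ = (2*(F+1)) * (X^(c+1) * (Ex*Ey)) := by rw [hmul]
        _ = (2*(X^(c+1)*Ex) + X*(F-1)*(X^c*Ex)) * (2*Ey) := by ring
        _ = (2*(S1*(F-1)^(c+1)) + X*(F-1)*(S0*(F-1)^c)) * (T*(F+1)) := by rw [h2, h3, h4]
        _ = ((2:PowerSeries ℝ)*S1 + X*S0) * T * ((F-1)^(c+1) * (F+1)) := by ring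
    rw [show (2:PowerSeries ℝ) = PowerSeries.C (R := ℝ) 2 from (map_ofNat _ 2).symm] at key
    have hc := congrArg (PowerSeries.coeff (R := ℝ) n) key
    rw [PowerSeries.coeff_C_mul] at hc
    rw [PowerSeries.coeff_mul, Finset.Nat.sum_antidiagonal_eq_sum_range_succ_mk] at hc
    simp only [map_add, PowerSeries.coeff_C_mul, hS', hS1, hT, PowerSeries.coeff_mk,
      Nat.succ_eq_add_one] at hc
    have hnfac : (n.factorial : ℝ) ≠ 0 := Nat.cast_ne_zero.mpr n.factorial_ne_zero
    calc B (c+1) (x+y) n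
        = (n.factorial:ℝ)/2 * (2 * (B (c+1) (x+y) n / n.factorial)) := by field_simp
      _ = _ := by
          rw [hc, Finset.mul_sum]
          refine Finset.sum_congr rfl fun k hk => ?_
          have hk' : k ≤ n := Nat.lt_succ_iff.mp (Finset.mem_range.mp hk)
          have fnk : ((n-k).factorial : ℝ) ≠ 0 := Nat.cast_ne_zero.mpr (n-k).factorial_ne_zero
          match k, hk' with
          | 0, _ =>
            simp only [PowerSeries.coeff_zero_eq_constantCoeff, map_mul,
              PowerSeries.constantCoeff_X, zero_mul, add_zero, Nat.cast_zero, zero_div,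
              Nat.choose_zero_right, Nat.cast_one, Nat.factorial_zero,
              Nat.sub_zero, mul_zero]
            field_simp
          | (j+1), hk' =>
            rw [PowerSeries.coeff_succ_X_mul, PowerSeries.coeff_mk]
            have hfac : (n.factorial:ℝ)
                = (n.choose (j+1)) * (j+1).factorial * (n-(j+1)).factorial := by
              exact_mod_cast (Nat.choose_mul_factorial_mul_factorial hk').symm
            have hjf : ((j+1).factorial:ℝ) = ((j:ℝ)+1) * j.factorial := by
              push_cast [Nat.factorial_succ]; ring
            have fj : (j.factorial : ℝ) ≠ 0 := Nat.cast_ne_zero.mpr j.factorial_ne_zero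
            have fj1 : ((j:ℝ)+1) ≠ 0 := by positivity
            rw [Nat.add_sub_cancel, hfac, hjf]
            push_cast
            field_simp
  · have hE0 : ∀ m z, E m z 0 = 1 := by
      intro m z
      have h := congrArg (PowerSeries.constantCoeff (R := ℝ)) (hE m z)
      simp only [map_mul, map_pow, map_add, map_one, PowerSeries.constantCoeff_mk,
        map_ofNat] at h
      simp only [degExp, PowerSeries.constantCoeff_mk, dff, Finset.range_zero,
        Finset.prod_empty, Nat.factorial_zero, Nat.cast_one, div_one] at h
      have h2 : (2:ℝ)^m ≠ 0 := by positivity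
      exact mul_right_cancel₀ h2 (by linear_combination h)
    intro b hb
    obtain ⟨d, rfl⟩ : ∃ d, b = d + 1 := ⟨b - 1, by omega⟩
    simp only [Nat.add_sub_cancel]
    have h1 := hE (d+1) (x+y)
    have h2 := hB 1 x
    rw [pow_one, pow_one] at h2
    have h3 := hE d y
    have h4 := hE (d+1) y
    have hmul := degExp_mul lam x y
    set F := degExp lam 1 with hF
    set Ex := degExp lam x with hEx
    set Ey := degExp lam y with hEy
    set Exy := degExp lam (x+y) with hExy
    set T' := (PowerSeries.mk fun m => E (d+1) (x+y) m / m.factorial : PowerSeries ℝ) with hT'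
    set S1 := (PowerSeries.mk fun m => B 1 x m / m.factorial : PowerSeries ℝ) with hS1
    set Td := (PowerSeries.mk fun m => E d y m / m.factorial : PowerSeries ℝ) with hTd
    set Td1 := (PowerSeries.mk fun m => E (d+1) y m / m.factorial : PowerSeries ℝ) with hTd1
    have key : X * T' = (2:PowerSeries ℝ) * S1 * (Td - Td1) := by
      have hne : ((F-1) * (F+1)^(d+1)) ≠ 0 :=
        mul_ne_zero (degExp_sub_one_ne lam) (pow_ne_zero _ (degExp_add_one_ne lam))
      apply mul_right_cancel₀ hne
      calc X * T' * ((F-1) * (F+1)^(d+1))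
          = (X*(F-1)) * (T' * (F+1)^(d+1)) := by ring
        _ = (X*(F-1)) * ((2:PowerSeries ℝ)^(d+1) * Exy) := by rw [h1]
        _ = (X*(F-1)) * (2^(d+1) * (Ex*Ey)) := by rw [hmul]
        _ = 2*(X*Ex) * (((2:PowerSeries ℝ)^d*Ey)*(F+1) - (2:PowerSeries ℝ)^(d+1)*Ey) := by
            ring
        _ = 2*(S1*(F-1)) * ((Td*(F+1)^d)*(F+1) - Td1*(F+1)^(d+1)) := by rw [h2, h3, h4]
        _ = (2:PowerSeries ℝ) * S1 * (Td - Td1) * ((F-1) * (F+1)^(d+1)) := by ring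
    rw [show (2:PowerSeries ℝ) = PowerSeries.C (R := ℝ) 2 from (map_ofNat _ 2).symm] at key
    have hc := congrArg (PowerSeries.coeff (R := ℝ) (n+1)) key
    rw [PowerSeries.coeff_succ_X_mul] at hc
    rw [PowerSeries.coeff_mul, Finset.Nat.sum_antidiagonal_eq_sum_range_succ_mk] at hc
    simp only [map_sub, PowerSeries.coeff_C_mul, hT', hS1, hTd, hTd1, PowerSeries.coeff_mk,
      Nat.succ_eq_add_one] at hc
    rw [Finset.sum_range_succ] at hc
    simp only [Nat.sub_self, Nat.factorial_zero, Nat.cast_one, hE0, div_one, sub_self,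
      mul_zero, add_zero] at hc
    rw [← Finset.sum_range_reflect] at hc
    have hnfac : (n.factorial : ℝ) ≠ 0 := Nat.cast_ne_zero.mpr n.factorial_ne_zero
    calc E (d+1) (x+y) n
        = (n.factorial:ℝ) * (E (d+1) (x+y) n / n.factorial) := by field_simp
      _ = _ := by
          rw [hc, Finset.mul_sum]
          refine Finset.sum_congr rfl fun k hk => ?_
          have hk' : k ≤ n := Nat.lt_succ_iff.mp (Finset.mem_range.mp hk)
          have e1 : n + 1 - 1 - k = n - k := by omega
          rw [e1]
          rw [show n + 1 - (n - k) = k + 1 by omega]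
          have hfac : (n.factorial:ℝ)
              = (n.choose k) * k.factorial * (n-k).factorial := by
            exact_mod_cast (Nat.choose_mul_factorial_mul_factorial hk').symm
          have hk1f : ((k+1).factorial:ℝ) = ((k:ℝ)+1) * k.factorial := by
            push_cast [Nat.factorial_succ]; ring
          have fk : (k.factorial : ℝ) ≠ 0 := Nat.cast_ne_zero.mpr k.factorial_ne_zero
          have fnk : ((n-k).factorial : ℝ) ≠ 0 := Nat.cast_ne_zero.mpr (n-k).factorial_ne_zero
          have fk1 : ((k:ℝ)+1) ≠ 0 := by positivity
          rw [hfac, hk1f]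
          push_cast
          field_simp
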